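/- Assume that every family T of infinite subsets of ℕ that is linearly ordered by almost inclusion ⊆* and has cardinality strictly less than the continuum 𝔠 admits a pseudointersection, i.e., an infinite set z ⊆ ℕ with z ⊆* y for every y ∈ T (this is the hypothesis 𝔱 = 𝔠). Then there exist disjoint sets X, Y ⊆ 2^ω, each of cardinality 𝔠, such that: (1) X is Borel 𝔠-concentrated on Y, i.e., for every Borel set B ⊆ 2^ω, if Y ⊆ B then |X \ B| < 𝔠; (2) Y² \ Δ is relatively F_σ in X² ∪ Y², i.e., there is an F_σ subset F of 2^ω × 2^ω with F ∩ (X² ∪ Y²) = Y² \ Δ; and (3) X² \ Δ is relatively F_σ in X² ∪ Y², i.e., there is an F_σ subset H of 2^ω × 2^ω with H ∩ (X² ∪ Y²) = X² \ Δ. Here Δ = {(x,x) : x ∈ 2^ω} is the diagonal. -/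

import Mathlib

open MeasureTheory

/-- A set is `F_σ` if it is a countable union of closed sets. -/
def IsFsigma {Z : Type*} [TopologicalSpace Z] (S : Set Z) : Prop :=
  ∃ C : ℕ → Set Z, (∀ n, IsClosed (C n)) ∧ S = ⋃ n, C n

namespace Stmt3Aux

open Set
open scoped Classical

abbrev P3 := ℕ → Bool

noncomputable def pt3 (s : Set ℕ) : P3 := fun n => @decide (n ∈ s) (Classical.propDecidable _)

lemma pt3_mem {s : Set ℕ} {n : ℕ} : pt3 s n = true ↔ n ∈ s := by
  simp [pt3]

lemma pt3_inj : Function.Injective pt3 := by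
  intro s t h
  ext n
  rw [← pt3_mem (s := s), h, pt3_mem]

/-- the "even-indexed" elements of `s`. -/
noncomputable def ev (s : Set ℕ) : Set ℕ := Set.range fun k => Nat.nth (· ∈ s) (2 * k)

lemma ev_subset {s : Set ℕ} (hs : s.Infinite) : ev s ⊆ s := by
  rintro _ ⟨k, rfl⟩
  exact Nat.nth_mem_of_infinite hs _

lemma ev_infinite {s : Set ℕ} (hs : s.Infinite) : (ev s).Infinite :=
  Set.infinite_range_of_injective <| (Nat.nth_injective hs).comp fun a b h => by omega

lemma ev_diff_infinite {s : Set ℕ} (hs : s.Infinite) : (s \ ev s).Infinite := by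
  have hsub : Set.range (fun k => Nat.nth (· ∈ s) (2 * k + 1)) ⊆ s \ ev s := by
    rintro _ ⟨k, rfl⟩
    refine ⟨Nat.nth_mem_of_infinite hs _, ?_⟩
    rintro ⟨k', hk'⟩
    have := Nat.nth_injective hs hk'
    omega
  exact (Set.infinite_range_of_injective
    ((Nat.nth_injective hs).comp (fun a b h => by omega))).mono hsub

lemma inter_infinite {s t : Set ℕ} (hs : s.Infinite) (h : (s \ t).Finite) : (s ∩ t).Infinite := by
  intro hfin
  exact hs ((hfin.union h).subset fun x hx => by
    by_cases hxt : x ∈ t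
    exacts [Or.inl ⟨hx, hxt⟩, Or.inr ⟨hx, hxt⟩])

lemma diff_infinite {s t : Set ℕ} (hs : s.Infinite) (h : (s ∩ t).Finite) : (s \ t).Infinite := by
  intro hfin
  exact hs ((h.union hfin).subset fun x hx => by
    by_cases hxt : x ∈ t
    exacts [Or.inl ⟨hx, hxt⟩, Or.inr ⟨hx, hxt⟩])

lemma sub_star_trans {a b c : Set ℕ} (h1 : (a \ b).Finite) (h2 : (b \ c).Finite) :
    (a \ c).Finite :=
  (h1.union h2).subset fun x hx => by
    by_cases hxb : x ∈ b
    exacts [Or.inr ⟨hxb, hx.2⟩, Or.inl ⟨hx.1, hxb⟩]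

noncomputable def psel (T : Set (Set ℕ)) : Set ℕ :=
  if h : ∃ z : Set ℕ, z.Infinite ∧ ∀ t ∈ T, (z \ t).Finite then h.choose else Set.univ

lemma psel_spec {T : Set (Set ℕ)} (h : ∃ z : Set ℕ, z.Infinite ∧ ∀ t ∈ T, (z \ t).Finite) :
    (psel T).Infinite ∧ ∀ t ∈ T, (psel T \ t).Finite := by
  rw [psel, dif_pos h]; exact h.choose_spec

noncomputable def wsel (B : Set P3) (z : Set ℕ) : Set ℕ :=
  if h : ∃ s : Set ℕ, s.Infinite ∧ (s \ z).Finite ∧ pt3 s ∉ B then h.choose else z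

lemma wsel_pos {B : Set P3} {z : Set ℕ}
    (h : ∃ s : Set ℕ, s.Infinite ∧ (s \ z).Finite ∧ pt3 s ∉ B) :
    (wsel B z).Infinite ∧ (wsel B z \ z).Finite ∧ pt3 (wsel B z) ∉ B := by
  rw [wsel, dif_pos h]; exact h.choose_spec

lemma wsel_neg {B : Set P3} {z : Set ℕ}
    (h : ¬ ∃ s : Set ℕ, s.Infinite ∧ (s \ z).Finite ∧ pt3 s ∉ B) :
    wsel B z = z := by
  rw [wsel, dif_neg h]

section Rec

variable (r : P3 → P3 → Prop) (wf : WellFounded r) (Bor : P3 → Set P3)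

noncomputable def stg : P3 → Set ℕ × Set ℕ × Set ℕ :=
  wf.fix fun i rec =>
    let T : Set (Set ℕ) := {t | ∃ j, ∃ _h : r j i, t = (rec j _h).2.1 ∨ t = (rec j _h).2.2}
    let w := wsel (Bor i) (psel T)
    (ev (ev w), w, ev w \ ev (ev w))

noncomputable def yy (i : P3) : Set ℕ := (stg r wf Bor i).2.1
noncomputable def cc (i : P3) : Set ℕ := (stg r wf Bor i).2.2
noncomputable def xx (i : P3) : Set ℕ := (stg r wf Bor i).1

def chn (i : P3) : Set (Set ℕ) :=
  {t | ∃ j, ∃ _h : r j i, t = yy r wf Bor j ∨ t = cc r wf Bor j}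

noncomputable def zz (i : P3) : Set ℕ := psel (chn r wf Bor i)

lemma stg_eq (i : P3) :
    stg r wf Bor i =
      (ev (ev (wsel (Bor i) (zz r wf Bor i))), wsel (Bor i) (zz r wf Bor i),
        ev (wsel (Bor i) (zz r wf Bor i)) \ ev (ev (wsel (Bor i) (zz r wf Bor i)))) := by
  show wf.fix _ i = _
  rw [WellFounded.fix_eq]
  rfl

lemma yy_eq (i : P3) : yy r wf Bor i = wsel (Bor i) (zz r wf Bor i) := by
  rw [yy, stg_eq]

lemma xx_eq (i : P3) : xx r wf Bor i = ev (ev (yy r wf Bor i)) := by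
  rw [xx, stg_eq, yy_eq]

lemma cc_eq (i : P3) : cc r wf Bor i = ev (yy r wf Bor i) \ ev (ev (yy r wf Bor i)) := by
  rw [cc, stg_eq, yy_eq]

lemma cc_sub_yy {i : P3} (h : (yy r wf Bor i).Infinite) : cc r wf Bor i ⊆ yy r wf Bor i := by
  rw [cc_eq]
  exact fun x hx => ev_subset h hx.1

lemma good
    (HT : ∀ T : Set (Set ℕ), (∀ y ∈ T, y.Infinite) →
      (∀ u ∈ T, ∀ v ∈ T, (u \ v).Finite ∨ (v \ u).Finite) →
      Cardinal.mk ↥T < Cardinal.continuum →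
      ∃ z : Set ℕ, z.Infinite ∧ ∀ y ∈ T, (z \ y).Finite)
    (tri : ∀ a b : P3, r a b ∨ a = b ∨ r b a)
    (hcard : ∀ i : P3, Cardinal.mk ↥{j | r j i} < Cardinal.continuum) :
    ∀ i, (yy r wf Bor i).Infinite ∧
      ∀ j, r j i →
        ((yy r wf Bor i \ yy r wf Bor j).Finite ∧ (yy r wf Bor i \ cc r wf Bor j).Finite) := by
  intro i
  refine wf.induction (C := fun i => (yy r wf Bor i).Infinite ∧
      ∀ j, r j i →
        ((yy r wf Bor i \ yy r wf Bor j).Finite ∧ (yy r wf Bor i \ cc r wf Bor j).Finite)) i ?_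
  intro i IH
  have hyinf : ∀ j, r j i → (yy r wf Bor j).Infinite := fun j hj => (IH j hj).1
  have hTinf : ∀ t ∈ chn r wf Bor i, t.Infinite := by
    rintro t ⟨j, hj, rfl | rfl⟩
    · exact hyinf j hj
    · rw [cc_eq]
      exact ev_diff_infinite (ev_infinite (hyinf j hj))
  have key : ∀ jl jg, r jg i → r jl jg →
      ∀ u, (u = yy r wf Bor jl ∨ u = cc r wf Bor jl) →
      ∀ v, (v = yy r wf Bor jg ∨ v = cc r wf Bor jg) → (v \ u).Finite := by
    intro jl jg hgi hlg u hu v hv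
    have h2 : (yy r wf Bor jg \ u).Finite := by
      rcases hu with rfl | rfl
      exacts [((IH jg hgi).2 jl hlg).1, ((IH jg hgi).2 jl hlg).2]
    rcases hv with rfl | rfl
    · exact h2
    · exact h2.subset (Set.diff_subset_diff_left (cc_sub_yy r wf Bor (hyinf jg hgi)))
  have hTlin : ∀ u ∈ chn r wf Bor i, ∀ v ∈ chn r wf Bor i,
      (u \ v).Finite ∨ (v \ u).Finite := by
    rintro u ⟨j, hj, hu⟩ v ⟨j', hj', hv⟩
    rcases tri j j' with hlt | heq | hgt
    · exact Or.inr (key j j' hj' hlt u hu v hv)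
    · subst heq
      have hccyy : cc r wf Bor j ⊆ yy r wf Bor j := cc_sub_yy r wf Bor (hyinf j hj)
      rcases hu with rfl | rfl <;> rcases hv with rfl | rfl
      · exact Or.inl (by simpa using Set.finite_empty)
      · refine Or.inr ((Set.finite_empty).subset ?_)
        intro x hx
        exact (hx.2 (hccyy hx.1)).elim
      · refine Or.inl ((Set.finite_empty).subset ?_)
        intro x hx
        exact (hx.2 (hccyy hx.1)).elim
      · exact Or.inl (by simpa using Set.finite_empty)
    · exact Or.inl (key j' j hj hgt v hv u hu)
  have hTcard : Cardinal.mk ↥(chn r wf Bor i) < Cardinal.continuum := by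
    have hsub : chn r wf Bor i ⊆
        (fun j => yy r wf Bor j) '' {j | r j i} ∪ (fun j => cc r wf Bor j) '' {j | r j i} := by
      rintro t ⟨j, hj, rfl | rfl⟩
      · exact Or.inl ⟨j, hj, rfl⟩
      · exact Or.inr ⟨j, hj, rfl⟩
    refine lt_of_le_of_lt (Cardinal.mk_le_mk_of_subset hsub) ?_
    refine lt_of_le_of_lt (Cardinal.mk_union_le _ _) ?_
    exact Cardinal.add_lt_of_lt Cardinal.aleph0_le_continuum
      (lt_of_le_of_lt Cardinal.mk_image_le (hcard i))
      (lt_of_le_of_lt Cardinal.mk_image_le (hcard i))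
  have hz : (zz r wf Bor i).Infinite ∧ ∀ t ∈ chn r wf Bor i, (zz r wf Bor i \ t).Finite :=
    psel_spec (HT _ hTinf hTlin hTcard)
  by_cases hw : ∃ s : Set ℕ, s.Infinite ∧ (s \ zz r wf Bor i).Finite ∧ pt3 s ∉ Bor i
  · obtain ⟨h1, h2, _⟩ := wsel_pos hw
    rw [← yy_eq] at h1 h2
    refine ⟨h1, fun j hj => ?_⟩
    have hzj : (zz r wf Bor i \ yy r wf Bor j).Finite := hz.2 _ ⟨j, hj, Or.inl rfl⟩
    have hzc : (zz r wf Bor i \ cc r wf Bor j).Finite := hz.2 _ ⟨j, hj, Or.inr rfl⟩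
    exact ⟨sub_star_trans h2 hzj, sub_star_trans h2 hzc⟩
  · have heq : yy r wf Bor i = zz r wf Bor i := by rw [yy_eq]; exact wsel_neg hw
    rw [heq]
    exact ⟨hz.1, fun j hj => ⟨hz.2 _ ⟨j, hj, Or.inl rfl⟩, hz.2 _ ⟨j, hj, Or.inr rfl⟩⟩⟩

end Rec

/-! F_σ building blocks -/

lemma bool_pair_closed (s : Set (Bool × Bool)) (k l : ℕ) :
    IsClosed {pq : P3 × P3 | (pq.1 k, pq.2 l) ∈ s} := by
  have : {pq : P3 × P3 | (pq.1 k, pq.2 l) ∈ s} =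
      (fun pq : P3 × P3 => (pq.1 k, pq.2 l)) ⁻¹' s := rfl
  rw [this]
  exact (s.toFinite.isClosed).preimage
    (((continuous_apply k).comp continuous_fst).prodMk ((continuous_apply l).comp continuous_snd))

def FA (n k : ℕ) : Set (P3 × P3) :=
  (⋂ m, ⋂ _ : n ≤ m, {pq : P3 × P3 |
      (pq.1 m, pq.2 m) ∈ {b : Bool × Bool | b.1 = true → b.2 = true}}) ∩
    {pq : P3 × P3 | (pq.1 k, pq.2 k) ∈ {b : Bool × Bool | b.1 ≠ b.2}}

def FB (n k : ℕ) : Set (P3 × P3) :=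
  (⋂ m, ⋂ _ : n ≤ m, {pq : P3 × P3 |
      (pq.1 m, pq.2 m) ∈ {b : Bool × Bool | b.2 = true → b.1 = true}}) ∩
    {pq : P3 × P3 | (pq.1 k, pq.2 k) ∈ {b : Bool × Bool | b.1 ≠ b.2}}

def HC (n k : ℕ) : Set (P3 × P3) :=
  (⋂ m, ⋂ _ : n ≤ m, {pq : P3 × P3 |
      (pq.1 m, pq.2 m) ∈ {b : Bool × Bool | ¬(b.1 = true ∧ b.2 = true)}}) ∩
    {pq : P3 × P3 | (pq.1 k, pq.2 k) ∈ {b : Bool × Bool | b.1 ≠ b.2}}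

lemma FA_closed (n k : ℕ) : IsClosed (FA n k) :=
  IsClosed.inter (isClosed_iInter fun _ => isClosed_iInter fun _ => bool_pair_closed _ _ _)
    (bool_pair_closed _ _ _)

lemma FB_closed (n k : ℕ) : IsClosed (FB n k) :=
  IsClosed.inter (isClosed_iInter fun _ => isClosed_iInter fun _ => bool_pair_closed _ _ _)
    (bool_pair_closed _ _ _)

lemma HC_closed (n k : ℕ) : IsClosed (HC n k) :=
  IsClosed.inter (isClosed_iInter fun _ => isClosed_iInter fun _ => bool_pair_closed _ _ _)
    (bool_pair_closed _ _ _)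

lemma mem_FA {n k : ℕ} {pq : P3 × P3} :
    pq ∈ FA n k ↔ (∀ m, n ≤ m → (pq.1 m = true → pq.2 m = true)) ∧ pq.1 k ≠ pq.2 k := by
  simp [FA]

lemma mem_FB {n k : ℕ} {pq : P3 × P3} :
    pq ∈ FB n k ↔ (∀ m, n ≤ m → (pq.2 m = true → pq.1 m = true)) ∧ pq.1 k ≠ pq.2 k := by
  simp [FB]

lemma mem_HC {n k : ℕ} {pq : P3 × P3} :
    pq ∈ HC n k ↔ (∀ m, n ≤ m → ¬(pq.1 m = true ∧ pq.2 m = true)) ∧ pq.1 k ≠ pq.2 k := by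
  simp [HC]

lemma hptk {s t : Set ℕ} (hne : s ≠ t) : ∃ k, pt3 s k ≠ pt3 t k := by
  by_contra h
  push_neg at h
  exact hne (pt3_inj (funext h))

lemma hbound {s t : Set ℕ} (hf : (s \ t).Finite) :
    ∃ n, ∀ m, n ≤ m → (pt3 s m = true → pt3 t m = true) := by
  obtain ⟨N, hN⟩ := hf.bddAbove
  refine ⟨N + 1, fun m hm hms => ?_⟩
  rw [pt3_mem] at hms ⊢
  by_contra hmt
  have := hN (Set.mem_diff m |>.mpr ⟨hms, hmt⟩)
  omega

lemma hbound2 {s t : Set ℕ} (hf : (s ∩ t).Finite) :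
    ∃ n, ∀ m, n ≤ m → ¬(pt3 s m = true ∧ pt3 t m = true) := by
  obtain ⟨N, hN⟩ := hf.bddAbove
  refine ⟨N + 1, fun m hm hmem => ?_⟩
  rw [pt3_mem, pt3_mem] at hmem
  have := hN hmem
  omega

lemma hrev {s t : Set ℕ} {n : ℕ} (h : ∀ m, n ≤ m → (pt3 s m = true → pt3 t m = true)) :
    (s \ t).Finite := by
  refine (Set.finite_Iio n).subset fun x hx => ?_
  by_contra hxn
  simp only [Set.mem_Iio, not_lt] at hxn
  exact hx.2 (pt3_mem.mp (h x hxn (pt3_mem.mpr hx.1)))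

lemma hrev2 {s t : Set ℕ} {n : ℕ} (h : ∀ m, n ≤ m → ¬(pt3 s m = true ∧ pt3 t m = true)) :
    (s ∩ t).Finite := by
  refine (Set.finite_Iio n).subset fun x hx => ?_
  by_contra hxn
  simp only [Set.mem_Iio, not_lt] at hxn
  exact h x hxn ⟨pt3_mem.mpr hx.1, pt3_mem.mpr hx.2⟩

end Stmt3Aux

open Stmt3Aux

/-- (𝔱 = 𝔠) There are disjoint sets `X, Y ⊆ 2^ω` of cardinality `𝔠` such that `X` is
Borel `𝔠`-concentrated on `Y`, `Y² \ Δ` is relatively `F_σ` in `X² ∪ Y²`, and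
`X² \ Δ` is relatively `F_σ` in `X² ∪ Y²`. -/
theorem stmt3
    (ht : ∀ T : Set (Set ℕ), (∀ y ∈ T, y.Infinite) →
      (∀ u ∈ T, ∀ v ∈ T, (u \ v).Finite ∨ (v \ u).Finite) →
      Cardinal.mk ↥T < Cardinal.continuum →
      ∃ z : Set ℕ, z.Infinite ∧ ∀ y ∈ T, (z \ y).Finite) :
    ∃ X Y : Set (ℕ → Bool),
      Cardinal.mk ↥X = Cardinal.continuum ∧ Cardinal.mk ↥Y = Cardinal.continuum ∧
      Disjoint X Y ∧
      (∀ B : Set (ℕ → Bool), MeasurableSet[borel (ℕ → Bool)] B → Y ⊆ B →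
        Cardinal.mk ↥(X \ B) < Cardinal.continuum) ∧
      (∃ F : Set ((ℕ → Bool) × (ℕ → Bool)), IsFsigma F ∧
        F ∩ (X ×ˢ X ∪ Y ×ˢ Y) = (Y ×ˢ Y) \ Set.diagonal (ℕ → Bool)) ∧
      (∃ H : Set ((ℕ → Bool) × (ℕ → Bool)), IsFsigma H ∧
        H ∩ (X ×ˢ X ∪ Y ×ˢ Y) = (X ×ˢ X) \ Set.diagonal (ℕ → Bool)) := by
  classical
  -- cardinality of the Cantor space
  have mkP : Cardinal.mk (ℕ → Bool) = Cardinal.continuum := by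
    rw [← Cardinal.power_def, Cardinal.mk_bool, Cardinal.mk_nat]
    exact Cardinal.two_power_aleph0
  -- cardinality of the open sets
  have mkOpens : Cardinal.mk ↥{s : Set P3 | IsOpen s} ≤ Cardinal.continuum := by
    have hB := TopologicalSpace.isBasis_countableBasis P3
    have hcount := TopologicalSpace.countable_countableBasis P3
    haveI := hcount.to_subtype
    have hinj : Function.Injective (fun U : {s : Set P3 // IsOpen s} =>
        {b : TopologicalSpace.countableBasis P3 | (b : Set P3) ⊆ U.1}) := by
      intro U V h
      have h' : ∀ b : TopologicalSpace.countableBasis P3,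
          ((b : Set P3) ⊆ U.1 ↔ (b : Set P3) ⊆ V.1) := by
        intro b
        rw [Set.ext_iff] at h
        simpa using h b
      have hset : {s ∈ TopologicalSpace.countableBasis P3 | s ⊆ U.1}
          = {s ∈ TopologicalSpace.countableBasis P3 | s ⊆ V.1} := by
        ext s
        constructor
        · rintro ⟨hs1, hs2⟩
          exact ⟨hs1, (h' ⟨s, hs1⟩).mp hs2⟩
        · rintro ⟨hs1, hs2⟩
          exact ⟨hs1, (h' ⟨s, hs1⟩).mpr hs2⟩
      apply Subtype.ext
      rw [hB.open_eq_sUnion' U.2, hB.open_eq_sUnion' V.2, hset]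
    refine le_trans (Cardinal.mk_le_of_injective hinj) ?_
    rw [Cardinal.mk_set]
    calc (2 : Cardinal) ^ Cardinal.mk (TopologicalSpace.countableBasis P3)
        ≤ 2 ^ Cardinal.aleph0 :=
          Cardinal.power_le_power_left (by norm_num) Cardinal.mk_le_aleph0
      _ = Cardinal.continuum := Cardinal.two_power_aleph0
  -- cardinality of the Borel sets
  have mkBorel : Cardinal.mk
      ↥{B : Set P3 | MeasurableSpace.GenerateMeasurable {s : Set P3 | IsOpen s} B} ≤
        Cardinal.continuum :=
    MeasurableSpace.cardinal_generateMeasurable_le_continuum mkOpens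
  have hgen : ∀ B : Set P3, MeasurableSet[borel P3] B →
      MeasurableSpace.GenerateMeasurable {s : Set P3 | IsOpen s} B := fun B hB => hB
  -- a well-order of minimal type on the Cantor space
  obtain ⟨r, wo, hr⟩ := Cardinal.ord_eq P3
  haveI := wo
  have wfr : WellFounded r := IsWellFounded.wf
  have tri : ∀ a b : P3, r a b ∨ a = b ∨ r b a := fun a b => trichotomous_of r a b
  have hcard : ∀ i : P3, Cardinal.mk ↥{j | r j i} < Cardinal.continuum := by
    intro i
    have h1 := Cardinal.card_typein_lt (r := r) i hr
    rw [mkP] at h1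
    exact h1
  -- an enumeration of the Borel sets
  haveI : Nonempty ↥{B : Set P3 | MeasurableSpace.GenerateMeasurable {s : Set P3 | IsOpen s} B} :=
    ⟨⟨∅, MeasurableSpace.GenerateMeasurable.empty⟩⟩
  obtain ⟨emb⟩ := (Cardinal.le_def _ _).mp (le_of_le_of_eq mkBorel mkP.symm)
  set Bor : P3 → Set P3 := fun i => (Function.invFun emb i).1 with hBorDef
  have hBorSurj : ∀ B : Set P3, MeasurableSet[borel P3] B → ∃ i, Bor i = B := by
    intro B hB
    refine ⟨emb ⟨B, hgen B hB⟩, ?_⟩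
    show (Function.invFun emb (emb ⟨B, hgen B hB⟩)).1 = B
    rw [Function.leftInverse_invFun emb.injective ⟨B, hgen B hB⟩]
  -- the recursion
  have G := good r wfr Bor ht tri hcard
  set Y' : P3 → Set ℕ := yy r wfr Bor with hY'
  set C' : P3 → Set ℕ := cc r wfr Bor with hC'
  set X' : P3 → Set ℕ := xx r wfr Bor with hX'
  have hyyinf : ∀ i, (Y' i).Infinite := fun i => (G i).1
  have hccsub : ∀ i, C' i ⊆ Y' i := fun i => cc_sub_yy r wfr Bor (hyyinf i)
  have hxsubev : ∀ i, X' i ⊆ ev (Y' i) := by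
    intro i
    rw [hX', xx_eq]
    exact ev_subset (ev_infinite (hyyinf i))
  have hxsub : ∀ i, X' i ⊆ Y' i := fun i => (hxsubev i).trans (ev_subset (hyyinf i))
  have hxxinf : ∀ i, (X' i).Infinite := by
    intro i
    rw [hX', xx_eq]
    exact ev_infinite (ev_infinite (hyyinf i))
  have hyc_diff_inf : ∀ i, (Y' i \ C' i).Infinite := by
    intro i
    refine (ev_diff_infinite (hyyinf i)).mono ?_
    refine Set.diff_subset_diff_right ?_
    rw [hC', cc_eq]
    exact Set.diff_subset
  have hxc_disj : ∀ i, X' i ∩ C' i = ∅ := by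
    intro i
    rw [hX', hC', xx_eq, cc_eq]
    exact Set.inter_diff_self _ _
  -- almost-inclusion facts for later stages
  have S1 : ∀ i j, r j i → (Y' i \ Y' j).Finite := fun i j h => ((G i).2 j h).1
  have S2 : ∀ i j, r j i → (Y' i \ C' j).Finite := fun i j h => ((G i).2 j h).2
  have S3 : ∀ i j, r j i → (X' i \ C' j).Finite := fun i j h =>
    (S2 i j h).subset (Set.diff_subset_diff_left (hxsub i))
  have had : ∀ i j, r j i → (X' i ∩ X' j).Finite := by
    intro i j h
    refine (S3 i j h).subset fun x hx => ⟨hx.1, fun hc => ?_⟩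
    exact (Set.eq_empty_iff_forall_notMem.mp (hxc_disj j) x) ⟨hx.2, hc⟩
  have hADsym : ∀ i j, i ≠ j → (X' i ∩ X' j).Finite := by
    intro i j hne
    rcases tri i j with h | h | h
    · rw [Set.inter_comm]; exact had j i h
    · exact absurd h hne
    · exact had i j h
  have hXdiffInf : ∀ i j, i ≠ j → (X' i \ X' j).Infinite := fun i j hne =>
    diff_infinite (hxxinf i) (hADsym i j hne)
  have hYint : ∀ i j, i ≠ j → (Y' i ∩ Y' j).Infinite := by
    intro i j hne
    rcases tri i j with h | h | h
    · rw [Set.inter_comm]; exact inter_infinite (hyyinf j) (S1 j i h)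
    · exact absurd h hne
    · exact inter_infinite (hyyinf i) (S1 i j h)
  have hYcmp : ∀ i j, i ≠ j → (Y' i \ Y' j).Finite ∨ (Y' j \ Y' i).Finite := by
    intro i j hne
    rcases tri i j with h | h | h
    · exact Or.inr (S1 j i h)
    · exact absurd h hne
    · exact Or.inl (S1 i j h)
  have yy_ne_aux : ∀ i j, r j i → Y' i ≠ Y' j := by
    intro i j h heq
    have h2 := S2 i j h
    rw [heq] at h2
    exact hyc_diff_inf j h2
  have yy_ne : ∀ i j, i ≠ j → Y' i ≠ Y' j := by
    intro i j hne
    rcases tri i j with h | h | h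
    · exact fun heq => yy_ne_aux j i h heq.symm
    · exact absurd h hne
    · exact yy_ne_aux i j h
  have xx_ne : ∀ i j, i ≠ j → X' i ≠ X' j := by
    intro i j hne heq
    have h2 := hADsym i j hne
    rw [heq, Set.inter_self] at h2
    exact hxxinf j h2
  have xy_ne : ∀ i j, X' i ≠ Y' j := by
    intro i j heq
    rcases tri i j with h | h | h
    · -- r i j : j is a later stage, Y' j ⊆* C' i, but X' i ∩ C' i = ∅
      have h2 := S2 j i h
      rw [← heq] at h2
      have hsub' : X' i ⊆ X' i \ C' i := fun x hx =>
        ⟨hx, fun hc => (Set.eq_empty_iff_forall_notMem.mp (hxc_disj i) x) ⟨hx, hc⟩⟩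
      exact hxxinf i (h2.subset hsub')
    · subst h
      have h2 : Y' i \ ev (Y' i) ⊆ (∅ : Set ℕ) := by
        intro x hx
        have hxy : x ∈ Y' i \ X' i := ⟨hx.1, fun hxx => hx.2 (hxsubev i hxx)⟩
        rw [← heq] at hxy
        exact hxy.2 hxy.1
      exact ev_diff_infinite (hyyinf i) (Set.finite_empty.subset h2)
    · -- r j i : i later, X' i ⊆* C' j, Y' j \ C' j infinite
      have h2 := S3 i j h
      rw [heq] at h2
      exact hyc_diff_inf j (h2.subset (Set.diff_subset_diff_left (le_refl _)))
  -- the sets X and Y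
  refine ⟨Set.range (fun i => pt3 (X' i)), Set.range (fun i => pt3 (Y' i)), ?_, ?_, ?_, ?_, ?_, ?_⟩
  · rw [Cardinal.mk_range_eq _ (fun a b h => by
      by_contra hne; exact xx_ne a b hne (pt3_inj h))]
    exact mkP
  · rw [Cardinal.mk_range_eq _ (fun a b h => by
      by_contra hne; exact yy_ne a b hne (pt3_inj h))]
    exact mkP
  · rw [Set.disjoint_left]
    rintro p ⟨i, rfl⟩ ⟨j, hj⟩
    exact xy_ne i j (pt3_inj hj).symm
  · -- Borel concentration
    intro B hB hYB
    obtain ⟨i, hi⟩ := hBorSurj B hB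
    have hnw : ¬ ∃ s : Set ℕ, s.Infinite ∧ (s \ zz r wfr Bor i).Finite ∧ pt3 s ∉ Bor i := by
      intro hex
      have h3 := (wsel_pos hex).2.2
      rw [← yy_eq] at h3
      exact h3 (by rw [hi]; exact hYB ⟨i, rfl⟩)
    have hnw' := hnw
    push_neg at hnw'
    have hyyzz : Y' i = zz r wfr Bor i := by
      rw [hY', yy_eq]
      exact wsel_neg hnw
    have hccz : C' i ⊆ zz r wfr Bor i := fun x hx => by
      have h1 : x ∈ Y' i := hccsub i hx
      rwa [hyyzz] at h1
    have hmem : ∀ δ, r i δ → pt3 (X' δ) ∈ B := by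
      intro δ hδ
      rw [← hi]
      refine hnw' _ (hxxinf δ) ?_
      exact (S3 δ i hδ).subset (fun x hx => ⟨hx.1, fun hc => hx.2 (hccz hc)⟩)
    have hsub : Set.range (fun i => pt3 (X' i)) \ B ⊆
        (fun δ => pt3 (X' δ)) '' (insert i {δ | r δ i}) := by
      rintro p ⟨⟨δ, rfl⟩, hpB⟩
      rcases tri i δ with h | h | h
      · exact absurd (hmem δ h) hpB
      · exact ⟨δ, Or.inl h.symm, rfl⟩
      · exact ⟨δ, Or.inr h, rfl⟩
    refine lt_of_le_of_lt (Cardinal.mk_le_mk_of_subset hsub) ?_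
    refine lt_of_le_of_lt Cardinal.mk_image_le ?_
    refine lt_of_le_of_lt Cardinal.mk_insert_le ?_
    exact Cardinal.add_lt_of_lt Cardinal.aleph0_le_continuum (hcard i)
      (lt_of_lt_of_le Cardinal.one_lt_aleph0 Cardinal.aleph0_le_continuum)
  · -- the F_σ set F : comparability
    refine ⟨⋃ m : ℕ, (FA m.unpair.1 m.unpair.2 ∪ FB m.unpair.1 m.unpair.2),
      ⟨_, fun m => (FA_closed _ _).union (FB_closed _ _), rfl⟩, ?_⟩
    ext ⟨p, q⟩
    constructor
    · rintro ⟨hF, hXY⟩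
      obtain ⟨m, hm⟩ := Set.mem_iUnion.mp hF
      have hk : p m.unpair.2 ≠ q m.unpair.2 := by
        rcases hm with hm | hm
        exacts [(mem_FA.mp hm).2, (mem_FB.mp hm).2]
      rcases hXY with hX | hY
      · -- impossible : X-pairs are never almost-comparable
        exfalso
        obtain ⟨⟨a, ha⟩, ⟨b, hb⟩⟩ := hX
        have ha' : pt3 (X' a) = p := ha
        have hb' : pt3 (X' b) = q := hb
        subst ha'
        subst hb'
        have hab : a ≠ b := by
          rintro rfl
          exact hk rfl
        rcases hm with hm | hm
        · exact hXdiffInf a b hab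
            (hrev (s := X' a) (t := X' b) (n := m.unpair.1)
              (fun mm hmm => (mem_FA.mp hm).1 mm hmm))
        · exact hXdiffInf b a (Ne.symm hab)
            (hrev (s := X' b) (t := X' a) (n := m.unpair.1)
              (fun mm hmm => (mem_FB.mp hm).1 mm hmm))
      · refine ⟨hY, fun hd => ?_⟩
        have hpq : p = q := hd
        exact hk (congrFun hpq _)
    · rintro ⟨hY, hD⟩
      obtain ⟨⟨a, ha⟩, ⟨b, hb⟩⟩ := hY
      have ha' : pt3 (Y' a) = p := ha
      have hb' : pt3 (Y' b) = q := hb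
      subst ha'
      subst hb'
      have hpq : pt3 (Y' a) ≠ pt3 (Y' b) := fun h => hD (show _ = _ from h)
      have hab : a ≠ b := by
        rintro rfl
        exact hpq rfl
      have hYne : Y' a ≠ Y' b := yy_ne a b hab
      obtain ⟨k, hk⟩ := hptk hYne
      refine ⟨?_, Or.inr ⟨⟨a, rfl⟩, ⟨b, rfl⟩⟩⟩
      rcases hYcmp a b hab with hcmp | hcmp
      · obtain ⟨n, hn⟩ := hbound hcmp
        refine Set.mem_iUnion.mpr ⟨Nat.pair n k, Or.inl (mem_FA.mpr ?_)⟩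
        rw [Nat.unpair_pair]
        exact ⟨fun mm hmm => hn mm hmm, hk⟩
      · obtain ⟨n, hn⟩ := hbound hcmp
        refine Set.mem_iUnion.mpr ⟨Nat.pair n k, Or.inr (mem_FB.mpr ?_)⟩
        rw [Nat.unpair_pair]
        exact ⟨fun mm hmm => hn mm hmm, hk⟩
  · -- the F_σ set H : almost disjointness
    refine ⟨⋃ m : ℕ, HC m.unpair.1 m.unpair.2,
      ⟨_, fun m => HC_closed _ _, rfl⟩, ?_⟩
    ext ⟨p, q⟩
    constructor
    · rintro ⟨hF, hXY⟩
      obtain ⟨m, hm⟩ := Set.mem_iUnion.mp hF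
      have hk : p m.unpair.2 ≠ q m.unpair.2 := (mem_HC.mp hm).2
      rcases hXY with hX | hY
      · refine ⟨hX, fun hd => ?_⟩
        have hpq : p = q := hd
        exact hk (congrFun hpq _)
      · exfalso
        obtain ⟨⟨a, ha⟩, ⟨b, hb⟩⟩ := hY
        have ha' : pt3 (Y' a) = p := ha
        have hb' : pt3 (Y' b) = q := hb
        subst ha'
        subst hb'
        have hab : a ≠ b := by
          rintro rfl
          exact hk rfl
        exact hYint a b hab
          (hrev2 (s := Y' a) (t := Y' b) (n := m.unpair.1)
            (fun mm hmm => (mem_HC.mp hm).1 mm hmm))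
    · rintro ⟨hX, hD⟩
      obtain ⟨⟨a, ha⟩, ⟨b, hb⟩⟩ := hX
      have ha' : pt3 (X' a) = p := ha
      have hb' : pt3 (X' b) = q := hb
      subst ha'
      subst hb'
      have hpq : pt3 (X' a) ≠ pt3 (X' b) := fun h => hD (show _ = _ from h)
      have hab : a ≠ b := by
        rintro rfl
        exact hpq rfl
      have hXne : X' a ≠ X' b := xx_ne a b hab
      obtain ⟨k, hk⟩ := hptk hXne
      obtain ⟨n, hn⟩ := hbound2 (hADsym a b hab)
      refine ⟨Set.mem_iUnion.mpr ⟨Nat.pair n k, mem_HC.mpr ?_⟩, Or.inl ⟨⟨a, rfl⟩, ⟨b, rfl⟩⟩⟩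
      rw [Nat.unpair_pair]
      exact ⟨fun mm hmm => hn mm hmm, hk⟩
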